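/- For any integer $k > 1$, let $G = P_{k^2} \,\square\, P_{k^2}$ be the grid graph (the Cartesian product of two paths of order $k^2$). Then $\frac{k^4}{(2k+1)^2} - 1 \le \dim_k(G) \le (k+2)^2 + (k+1)^2$; in particular $\dim_k(G) = \Theta(k^2)$. -/

import Mathlib

open SimpleGraph

/-- The distance-`k` truncated distance `dₖ(x,y) = min{d(x,y), k+1}`, valued in `ℕ∞`
(so unreachable pairs have distance `⊤`, which is truncated to `k+1`). -/
noncomputable def distK {V : Type*} (G : SimpleGraph V) (k : ℕ) (x y : V) : ℕ∞ :=
  min (G.edist x y) (k + 1)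

/-- `S` is a distance-`k` resolving set of `G`. -/
def IsDistKResolving {V : Type*} (G : SimpleGraph V) (k : ℕ) (S : Set V) : Prop :=
  ∀ x y : V, x ≠ y → ∃ z ∈ S, distK G k x z ≠ distK G k y z

/-- The distance-`k` dimension of a finite graph `G`: the minimum cardinality of a
distance-`k` resolving set of `G`. -/
noncomputable def dimK {V : Type*} [Fintype V] (G : SimpleGraph V) (k : ℕ) : ℕ :=
  sInf { m | ∃ S : Finset V, IsDistKResolving G k ↑S ∧ S.card = m }

/-! ### Auxiliary machinery -/

/-- symmetric distance on `ℕ` -/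
def nd (a b : ℕ) : ℕ := (a - b) + (b - a)

lemma pathGraph_exists_walk (n d : ℕ) : ∀ (i j : Fin n), j.val = i.val + d →
    ∃ p : (pathGraph n).Walk i j, p.length = d := by
  induction d with
  | zero =>
    intro i j h
    have : i = j := Fin.ext (by omega)
    subst this
    exact ⟨.nil, rfl⟩
  | succ m ih =>
    intro i j h
    have hi1 : i.val + 1 < n := by have := j.isLt; omega
    have hadj : (pathGraph n).Adj i ⟨i.val + 1, hi1⟩ := by rw [pathGraph_adj]; left; rfl
    obtain ⟨p, hp⟩ := ih ⟨i.val + 1, hi1⟩ j (by simp; omega)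
    exact ⟨.cons hadj p, by simp [hp]⟩

lemma pathGraph_walk_length {n : ℕ} {i j : Fin n} (p : (pathGraph n).Walk i j) :
    nd i.val j.val ≤ p.length := by
  induction p with
  | nil => simp [nd]
  | @cons a b c h q ih =>
    rw [pathGraph_adj] at h
    rw [Walk.length_cons]
    simp only [nd] at *
    omega

lemma pathGraph_edist (n : ℕ) (i j : Fin n) :
    (pathGraph n).edist i j = ((nd i.val j.val : ℕ) : ℕ∞) := by
  apply le_antisymm
  · rcases le_total i.val j.val with hle | hle
    · obtain ⟨p, hp⟩ := pathGraph_exists_walk n (j.val - i.val) i j (by omega)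
      calc (pathGraph n).edist i j ≤ p.length := edist_le p
        _ = ((nd i.val j.val : ℕ) : ℕ∞) := by rw [hp]; norm_cast; simp [nd]; omega
    · obtain ⟨p, hp⟩ := pathGraph_exists_walk n (i.val - j.val) j i (by omega)
      calc (pathGraph n).edist i j ≤ p.reverse.length := edist_le p.reverse
        _ = ((nd i.val j.val : ℕ) : ℕ∞) := by
            rw [Walk.length_reverse, hp]; norm_cast; simp [nd]; omega
  · rw [edist_eq_sInf]
    apply le_sInf
    rintro x ⟨p, rfl⟩
    exact_mod_cast Nat.cast_le.mpr (pathGraph_walk_length p)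

lemma boxProd_walk_le {α β : Type*} {G : SimpleGraph α} {H : SimpleGraph β} {u v : α × β}
    (p : (G □ H).Walk u v) : G.edist u.1 v.1 + H.edist u.2 v.2 ≤ p.length := by
  induction p with
  | nil => simp
  | @cons a b c h q ih =>
    rw [boxProd_adj] at h
    rw [Walk.length_cons]
    push_cast
    rcases h with ⟨h1, h2⟩ | ⟨h1, h2⟩
    · have t1 : G.edist a.1 c.1 ≤ 1 + G.edist b.1 c.1 := by
        calc G.edist a.1 c.1 ≤ G.edist a.1 b.1 + G.edist b.1 c.1 := SimpleGraph.edist_triangle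
          _ ≤ 1 + G.edist b.1 c.1 := by
              gcongr
              simpa using edist_le h1.toWalk
      have t2 : H.edist a.2 c.2 = H.edist b.2 c.2 := by rw [h2]
      calc G.edist a.1 c.1 + H.edist a.2 c.2 ≤ (1 + G.edist b.1 c.1) + H.edist b.2 c.2 := by
            rw [t2]; gcongr
        _ = 1 + (G.edist b.1 c.1 + H.edist b.2 c.2) := by ring
        _ ≤ 1 + (q.length : ℕ∞) := by gcongr
        _ = (q.length : ℕ∞) + 1 := by ring
    · have t1 : H.edist a.2 c.2 ≤ 1 + H.edist b.2 c.2 := by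
        calc H.edist a.2 c.2 ≤ H.edist a.2 b.2 + H.edist b.2 c.2 := SimpleGraph.edist_triangle
          _ ≤ 1 + H.edist b.2 c.2 := by
              gcongr
              simpa using edist_le h1.toWalk
      have t2 : G.edist a.1 c.1 = G.edist b.1 c.1 := by rw [h2]
      calc G.edist a.1 c.1 + H.edist a.2 c.2 ≤ G.edist b.1 c.1 + (1 + H.edist b.2 c.2) := by
            rw [t2]; gcongr
        _ = 1 + (G.edist b.1 c.1 + H.edist b.2 c.2) := by ring
        _ ≤ 1 + (q.length : ℕ∞) := by gcongr
        _ = (q.length : ℕ∞) + 1 := by ring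

lemma boxProd_edist {α β : Type*} {G : SimpleGraph α} {H : SimpleGraph β} (u v : α × β) :
    (G □ H).edist u v = G.edist u.1 v.1 + H.edist u.2 v.2 := by
  obtain ⟨u1, u2⟩ := u
  obtain ⟨v1, v2⟩ := v
  apply le_antisymm
  · rcases eq_or_ne (G.edist u1 v1) ⊤ with h1 | h1
    · simp [h1]
    rcases eq_or_ne (H.edist u2 v2) ⊤ with h2 | h2
    · simp [h2]
    obtain ⟨p, hp⟩ := exists_walk_of_edist_ne_top h1
    obtain ⟨q, hq⟩ := exists_walk_of_edist_ne_top h2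
    calc (G □ H).edist (u1, u2) (v1, v2) ≤ ((p.boxProdLeft H u2).append (q.boxProdRight G v1)).length :=
          edist_le _
      _ = G.edist u1 v1 + H.edist u2 v2 := by
          have e1 : (p.boxProdLeft H u2).length = p.length := Walk.length_map _ _
          have e2 : (q.boxProdRight G v1).length = q.length := Walk.length_map _ _
          rw [Walk.length_append, e1, e2]
          push_cast
          rw [hp, hq]
  · rw [edist_eq_sInf]
    apply le_sInf
    rintro x ⟨p, rfl⟩
    exact boxProd_walk_le p

lemma grid_edist {n : ℕ} (u v : Fin n × Fin n) :
    (pathGraph n □ pathGraph n).edist u v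
      = ((nd u.1.val v.1.val + nd u.2.val v.2.val : ℕ) : ℕ∞) := by
  rw [boxProd_edist, pathGraph_edist, pathGraph_edist]
  push_cast
  ring


lemma untrunc {k d e : ℕ} (h : min d (k+1) = min e (k+1)) (hd : d ≤ k) : e = d := by omega

lemma case1_arith (k s ry X Y X' Y' b : ℕ) (hs : s = k-1) (hk : 2 ≤ k)
    (hY : Y = b + ry) (hry : ry ≤ s)
    (H1 : min (nd X X + nd Y b) (k+1) = min (nd X' X + nd Y' b) (k+1))
    (H2 : min (nd X X + nd Y (b+s)) (k+1) = min (nd X' X + nd Y' (b+s)) (k+1)) :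
    X' = X ∧ Y' = Y := by
  have E1 := untrunc H1 (by clear H1 H2; simp only [nd]; omega)
  have E2 := untrunc H2 (by clear H1 H2; simp only [nd]; omega)
  clear H1 H2
  simp only [nd] at E1 E2
  omega

lemma case2_arith (k s rx X Y X' Y' a : ℕ) (hs : s = k-1) (hk : 2 ≤ k)
    (hX : X = a + rx) (hrx : rx ≤ s)
    (H1 : min (nd X a + nd Y Y) (k+1) = min (nd X' a + nd Y' Y) (k+1))
    (H2 : min (nd X (a+s) + nd Y Y) (k+1) = min (nd X' (a+s) + nd Y' Y) (k+1)) :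
    X' = X ∧ Y' = Y := by
  have E1 := untrunc H1 (by clear H1 H2; simp only [nd]; omega)
  have E2 := untrunc H2 (by clear H1 H2; simp only [nd]; omega)
  clear H1 H2
  simp only [nd] at E1 E2
  omega

lemma pin_fin (s a r w T T' W : ℕ) (h1 : 1 ≤ r) (h2 : r < s) (hT : T = a + r)
    (E1 : nd T' a + W = r + w) (E2 : nd T' (a+s) + W = (s - r) + w) : T' = T := by
  simp only [nd] at E1 E2; omega

lemma pin_fin' (s a r w T T' W : ℕ) (h1 : 1 ≤ r) (h2 : r < s) (hT : T = a + r)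
    (E1 : W + nd T' a = w + r) (E2 : W + nd T' (a+s) = w + (s - r)) : T' = T := by
  simp only [nd] at E1 E2; omega

lemma fin1 (c h r T T' : ℕ) (h0 : 1 ≤ r) (hh : 1 ≤ h) (hT : T = c + r)
    (c1 : nd T' c = r) (c2 : nd T' (c+h) = nd r h) : T' = T := by
  simp only [nd] at c1 c2; omega

lemma fin2 (c s h r T T' : ℕ) (h0 : r < s) (hh : h < s) (hT : T = c + r)
    (c1 : nd T' (c+s) = s - r) (c2 : nd T' (c+h) = nd r h) : T' = T := by
  simp only [nd] at c1 c2; omega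

lemma case3_arith (k s h a b rx ry X Y X' Y' : ℕ)
    (hs : s = k-1) (hh : h = (k-1)/2) (hk : 2 ≤ k)
    (hX : X = a + rx) (hY : Y = b + ry)
    (hrx1 : 1 ≤ rx) (hrx2 : rx < s) (hry1 : 1 ≤ ry) (hry2 : ry < s)
    (H1 : min (nd X a + nd Y b) (k+1) = min (nd X' a + nd Y' b) (k+1))
    (H2 : min (nd X a + nd Y (b+s)) (k+1) = min (nd X' a + nd Y' (b+s)) (k+1))
    (H3 : min (nd X (a+s) + nd Y b) (k+1) = min (nd X' (a+s) + nd Y' b) (k+1))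
    (H4 : min (nd X (a+s) + nd Y (b+s)) (k+1) = min (nd X' (a+s) + nd Y' (b+s)) (k+1))
    (H5 : min (nd X (a+h) + nd Y (b+h)) (k+1) = min (nd X' (a+h) + nd Y' (b+h)) (k+1)) :
    X' = X ∧ Y' = Y := by
  have na : nd X a = rx := by simp only [nd]; omega
  have nas : nd X (a+s) = s - rx := by simp only [nd]; omega
  have nb : nd Y b = ry := by simp only [nd]; omega
  have nbs : nd Y (b+s) = s - ry := by simp only [nd]; omega
  have nah : nd X (a+h) = nd rx h := by simp only [nd]; omega
  have nbh : nd Y (b+h) = nd ry h := by simp only [nd]; omega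
  rw [na, nb] at H1
  rw [na, nbs] at H2
  rw [nas, nb] at H3
  rw [nas, nbs] at H4
  rw [nah, nbh] at H5
  have hnd5 : nd rx h + nd ry h ≤ k := by
    clear H1 H2 H3 H4 H5; simp only [nd]; omega
  rcases le_or_gt (min ry (s-ry)) (min rx (s-rx) + 1) with hPXA | hgt
  · -- pin X via A-columns with the A-row nearest to y
    have hXX : X' = X := by
      rcases le_total ry (s - ry) with hyr | hyr
      · have E1 := untrunc H1 (by clear H1 H2 H3 H4 H5; omega)
        have E3 := untrunc H3 (by clear H1 H2 H3 H4 H5; omega)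
        exact pin_fin s a rx ry X X' (nd Y' b) hrx1 hrx2 hX E1 E3
      · have E2 := untrunc H2 (by clear H1 H2 H3 H4 H5; omega)
        have E4 := untrunc H4 (by clear H1 H2 H3 H4 H5; omega)
        exact pin_fin s a rx (s-ry) X X' (nd Y' (b+s)) hrx1 hrx2 hX E2 E4
    refine ⟨hXX, ?_⟩
    rcases le_or_gt (min rx (s-rx)) (min ry (s-ry) + 1) with hPYA | hgt2
    · -- pin Y via A-rows with the A-column nearest to x
      rcases le_total rx (s - rx) with hxr | hxr
      · have E1 := untrunc H1 (by clear H1 H2 H3 H4 H5; omega)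
        have E2 := untrunc H2 (by clear H1 H2 H3 H4 H5; omega)
        exact pin_fin' s b ry rx Y Y' (nd X' a) hry1 hry2 hY E1 E2
      · have E3 := untrunc H3 (by clear H1 H2 H3 H4 H5; omega)
        have E4 := untrunc H4 (by clear H1 H2 H3 H4 H5; omega)
        exact pin_fin' s b ry (s-rx) Y Y' (nd X' (a+s)) hry1 hry2 hY E3 E4
    · -- mr ≥ mt + 2 : use corner beacon and B-beacon (two distinct rows), X already pinned
      have hbig : 3 ≤ h := by clear H1 H2 H3 H4 H5; omega
      have E5 := untrunc H5 hnd5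
      rw [hXX, nah] at E5
      have c2 := Nat.add_left_cancel E5
      rcases le_total ry (s - ry) with hyr | hyr
      · have E1 := untrunc H1 (by clear H1 H2 H3 H4 H5; omega)
        rw [hXX, na] at E1
        exact fin1 b h ry Y Y' hry1 (by omega) hY (Nat.add_left_cancel E1) c2
      · have E2 := untrunc H2 (by clear H1 H2 H3 H4 H5; omega)
        rw [hXX, na] at E2
        exact fin2 b s h ry Y Y' hry2 (by clear H1 H2 H3 H4 H5; omega) hY
          (Nat.add_left_cancel E2) c2
  · -- mt ≥ mr + 2 : pin Y first, then two distinct columns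
    have hbig : 3 ≤ h := by clear H1 H2 H3 H4 H5; omega
    have hYY : Y' = Y := by
      rcases le_total rx (s - rx) with hxr | hxr
      · have E1 := untrunc H1 (by clear H1 H2 H3 H4 H5; omega)
        have E2 := untrunc H2 (by clear H1 H2 H3 H4 H5; omega)
        exact pin_fin' s b ry rx Y Y' (nd X' a) hry1 hry2 hY E1 E2
      · have E3 := untrunc H3 (by clear H1 H2 H3 H4 H5; omega)
        have E4 := untrunc H4 (by clear H1 H2 H3 H4 H5; omega)
        exact pin_fin' s b ry (s-rx) Y Y' (nd X' (a+s)) hry1 hry2 hY E3 E4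
    refine ⟨?_, hYY⟩
    have E5 := untrunc H5 hnd5
    rw [hYY, nbh] at E5
    have c2 := Nat.add_right_cancel E5
    rcases le_total rx (s - rx) with hxr | hxr
    · have E1 := untrunc H1 (by clear H1 H2 H3 H4 H5; omega)
      rw [hYY, nb] at E1
      exact fin1 a h rx X X' hrx1 (by omega) hX (Nat.add_right_cancel E1) c2
    · have E3 := untrunc H3 (by clear H1 H2 H3 H4 H5; omega)
      rw [hYY, nb] at E3
      exact fin2 a s h rx X X' hrx2 (by clear H1 H2 H3 H4 H5; omega) hX
        (Nat.add_right_cancel E3) c2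

lemma distK_grid {n k : ℕ} (u z : Fin n × Fin n) :
    distK (pathGraph n □ pathGraph n) k u z
      = ((min (nd u.1.val z.1.val + nd u.2.val z.2.val) (k+1) : ℕ) : ℕ∞) := by
  rw [distK, grid_edist]
  push_cast
  rfl

open Classical in
noncomputable def beacons (k : ℕ) : Finset (Fin (k^2) × Fin (k^2)) :=
  Finset.univ.filter (fun z =>
    ((∃ i, i ≤ k+1 ∧ z.1.val = i*(k-1)) ∧ (∃ j, j ≤ k+1 ∧ z.2.val = j*(k-1))) ∨
    ((∃ i, i ≤ k ∧ z.1.val = i*(k-1)+(k-1)/2) ∧ (∃ j, j ≤ k ∧ z.2.val = j*(k-1)+(k-1)/2)))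

lemma beacons_card (k : ℕ) : (beacons k).card ≤ (k+2)^2 + (k+1)^2 := by
  classical
  set A : Finset ℕ := (Finset.range (k+2)).image (fun i => i*(k-1)) with hA
  set B : Finset ℕ := (Finset.range (k+1)).image (fun i => i*(k-1)+(k-1)/2) with hB
  have hmap : ∀ z ∈ beacons k, (z.1.val, z.2.val) ∈ (A ×ˢ A) ∪ (B ×ˢ B) := by
    intro z hz
    simp only [beacons, Finset.mem_filter, Finset.mem_univ, true_and] at hz
    rcases hz with ⟨⟨i, hi, hxi⟩, ⟨j, hj, hyj⟩⟩ | ⟨⟨i, hi, hxi⟩, ⟨j, hj, hyj⟩⟩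
    · exact Finset.mem_union_left _ (Finset.mem_product.mpr
        ⟨Finset.mem_image.mpr ⟨i, Finset.mem_range.mpr (by omega), hxi.symm⟩,
         Finset.mem_image.mpr ⟨j, Finset.mem_range.mpr (by omega), hyj.symm⟩⟩)
    · exact Finset.mem_union_right _ (Finset.mem_product.mpr
        ⟨Finset.mem_image.mpr ⟨i, Finset.mem_range.mpr (by omega), hxi.symm⟩,
         Finset.mem_image.mpr ⟨j, Finset.mem_range.mpr (by omega), hyj.symm⟩⟩)
  calc (beacons k).card ≤ ((A ×ˢ A) ∪ (B ×ˢ B)).card := by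
        apply Finset.card_le_card_of_injOn _ hmap
        intro z1 _ z2 _ he
        simp only [Prod.mk.injEq] at he
        exact Prod.ext (Fin.ext he.1) (Fin.ext he.2)
    _ ≤ (A ×ˢ A).card + (B ×ˢ B).card := Finset.card_union_le _ _
    _ ≤ (k+2)^2 + (k+1)^2 := by
        rw [Finset.card_product, Finset.card_product, pow_two, pow_two]
        have h1 : A.card ≤ k+2 := le_trans (Finset.card_image_le) (by simp)
        have h2 : B.card ≤ k+1 := le_trans (Finset.card_image_le) (by simp)
        exact Nat.add_le_add (Nat.mul_le_mul h1 h1) (Nat.mul_le_mul h2 h2)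

lemma decomp (s : ℕ) : ∀ (m X : ℕ), X ≤ (m+1)*s → ∃ j r, j ≤ m ∧ r ≤ s ∧ X = j*s + r := by
  intro m
  induction m with
  | zero => intro X hX; exact ⟨0, X, le_refl _, by simpa using hX, by simp⟩
  | succ n ih =>
    intro X hX
    by_cases hc : X ≤ (n+1)*s
    · obtain ⟨j, r, h1, h2, h3⟩ := ih X hc
      exact ⟨j, r, by omega, h2, h3⟩
    · refine ⟨n+1, X - (n+1)*s, le_refl _, ?_, by omega⟩
      have he : (n+1+1)*s = (n+1)*s + s := by ring
      omega

set_option maxHeartbeats 2000000 in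
lemma beacons_resolving (k : ℕ) (hk : 2 ≤ k) :
    IsDistKResolving (pathGraph (k^2) □ pathGraph (k^2)) k ↑(beacons k) := by
  intro u v hne
  by_contra hc
  push_neg at hc
  refine hne ?_
  have H : ∀ z : Fin (k^2) × Fin (k^2), z ∈ beacons k →
      min (nd u.1.val z.1.val + nd u.2.val z.2.val) (k+1)
        = min (nd v.1.val z.1.val + nd v.2.val z.2.val) (k+1) := by
    intro z hz
    have h3 := hc z (Finset.mem_coe.mpr hz)
    rw [distK_grid, distK_grid] at h3
    exact_mod_cast h3
  have hN : k^2 = (k+1)*(k-1) + 1 := by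
    cases k with
    | zero => omega
    | succ n => simp only [Nat.succ_sub_one]; ring
  have coordA : ∀ i, i ≤ k+1 → i*(k-1) < k^2 := by
    intro i hi
    have := Nat.mul_le_mul_right (k-1) hi
    omega
  have coordB : ∀ i, i ≤ k → i*(k-1) + (k-1)/2 < k^2 := by
    intro i hi
    have h1 := Nat.mul_le_mul_right (k-1) hi
    have h2 : (k+1)*(k-1) = k*(k-1) + (k-1) := by ring
    omega
  have instA : ∀ i j, i ≤ k+1 → j ≤ k+1 →
      min (nd u.1.val (i*(k-1)) + nd u.2.val (j*(k-1))) (k+1)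
        = min (nd v.1.val (i*(k-1)) + nd v.2.val (j*(k-1))) (k+1) := by
    intro i j hi hj
    exact H (⟨i*(k-1), coordA i hi⟩, ⟨j*(k-1), coordA j hj⟩) (by
      simp only [beacons, Finset.mem_filter, Finset.mem_univ, true_and]
      exact Or.inl ⟨⟨i, hi, rfl⟩, ⟨j, hj, rfl⟩⟩)
  have instB : ∀ i j, i ≤ k → j ≤ k →
      min (nd u.1.val (i*(k-1)+(k-1)/2) + nd u.2.val (j*(k-1)+(k-1)/2)) (k+1)
        = min (nd v.1.val (i*(k-1)+(k-1)/2) + nd v.2.val (j*(k-1)+(k-1)/2)) (k+1) := by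
    intro i j hi hj
    exact H (⟨i*(k-1)+(k-1)/2, coordB i hi⟩, ⟨j*(k-1)+(k-1)/2, coordB j hj⟩) (by
      simp only [beacons, Finset.mem_filter, Finset.mem_univ, true_and]
      exact Or.inr ⟨⟨i, hi, rfl⟩, ⟨j, hj, rfl⟩⟩)
  clear H hc
  obtain ⟨jx, rx, hjx, hrx, hXdec⟩ := decomp (k-1) k u.1.val (by have := u.1.isLt; omega)
  obtain ⟨jy, ry, hjy, hry, hYdec⟩ := decomp (k-1) k u.2.val (by have := u.2.isLt; omega)
  by_cases hxA : rx = 0 ∨ rx = k-1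
  · -- u.1.val is an A-coordinate
    obtain ⟨c, hc1, hcX⟩ : ∃ c, c ≤ k+1 ∧ u.1.val = c*(k-1) := by
      rcases hxA with h | h
      · exact ⟨jx, by omega, by omega⟩
      · refine ⟨jx+1, by omega, ?_⟩
        have : (jx+1)*(k-1) = jx*(k-1)+(k-1) := by ring
        omega
    have H1 := instA c jy hc1 (by omega)
    have H2 := instA c (jy+1) hc1 (by clear H1; omega)
    rw [← hcX] at H1 H2
    have e2 : (jy+1)*(k-1) = jy*(k-1)+(k-1) := by ring
    rw [e2] at H2
    obtain ⟨exx, eyy⟩ := case1_arith k (k-1) ry u.1.val u.2.val v.1.val v.2.val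
      (jy*(k-1)) rfl hk hYdec hry H1 H2
    exact Prod.ext (Fin.ext exx.symm) (Fin.ext eyy.symm)
  · by_cases hyA : ry = 0 ∨ ry = k-1
    · -- u.2.val is an A-coordinate
      obtain ⟨c, hc1, hcY⟩ : ∃ c, c ≤ k+1 ∧ u.2.val = c*(k-1) := by
        rcases hyA with h | h
        · exact ⟨jy, by omega, by omega⟩
        · refine ⟨jy+1, by omega, ?_⟩
          have : (jy+1)*(k-1) = jy*(k-1)+(k-1) := by ring
          omega
      have H1 := instA jx c (by omega) hc1
      have H2 := instA (jx+1) c (by clear H1; omega) hc1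
      rw [← hcY] at H1 H2
      have e2 : (jx+1)*(k-1) = jx*(k-1)+(k-1) := by ring
      rw [e2] at H2
      obtain ⟨exx, eyy⟩ := case2_arith k (k-1) rx u.1.val u.2.val v.1.val v.2.val
        (jx*(k-1)) rfl hk hXdec hrx H1 H2
      exact Prod.ext (Fin.ext exx.symm) (Fin.ext eyy.symm)
    · -- both coordinates strictly inside A-intervals
      have H1 := instA jx jy (by omega) (by omega)
      have H2 := instA jx (jy+1) (by clear H1; omega) (by clear H1; omega)
      have H3 := instA (jx+1) jy (by clear H1 H2; omega) (by clear H1 H2; omega)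
      have H4 := instA (jx+1) (jy+1) (by clear H1 H2 H3; omega) (by clear H1 H2 H3; omega)
      have H5 := instB jx jy hjx hjy
      have ex : (jx+1)*(k-1) = jx*(k-1)+(k-1) := by ring
      have ey : (jy+1)*(k-1) = jy*(k-1)+(k-1) := by ring
      rw [ey] at H2
      rw [ex] at H3
      rw [ex, ey] at H4
      obtain ⟨exx, eyy⟩ := case3_arith k (k-1) ((k-1)/2) (jx*(k-1)) (jy*(k-1)) rx ry
        u.1.val u.2.val v.1.val v.2.val rfl rfl hk hXdec hYdec
        (by clear H1 H2 H3 H4 H5; omega) (by clear H1 H2 H3 H4 H5; omega)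
        (by clear H1 H2 H3 H4 H5; omega) (by clear H1 H2 H3 H4 H5; omega) H1 H2 H3 H4 H5
      exact Prod.ext (Fin.ext exx.symm) (Fin.ext eyy.symm)

lemma univ_resolving {V : Type*} [Fintype V] (G : SimpleGraph V) (k : ℕ) :
    IsDistKResolving G k ↑(Finset.univ : Finset V) := by
  intro x y hne
  refine ⟨x, by simp, ?_⟩
  have h1 : distK G k x x = 0 := by simp [distK]
  have hpos : 0 < distK G k y x := by
    apply lt_min
    · exact G.edist_pos_of_ne (Ne.symm hne)
    · exact_mod_cast Nat.succ_pos k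
  rw [h1]
  exact hpos.ne

lemma dimK_exists {V : Type*} [Fintype V] (G : SimpleGraph V) (k : ℕ) :
    ∃ S : Finset V, IsDistKResolving G k ↑S ∧ S.card = dimK G k := by
  have h : dimK G k ∈ { m | ∃ S : Finset V, IsDistKResolving G k ↑S ∧ S.card = m } :=
    Nat.sInf_mem ⟨(Finset.univ : Finset V).card, Finset.univ, univ_resolving G k, rfl⟩
  exact h

lemma dimK_le_card {V : Type*} [Fintype V] (G : SimpleGraph V) (k : ℕ) (S : Finset V)
    (hS : IsDistKResolving G k ↑S) : dimK G k ≤ S.card :=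
  Nat.sInf_le ⟨S, hS, rfl⟩

lemma lower_count (k : ℕ) (hk : 2 ≤ k) :
    k^4 ≤ 1 + dimK (pathGraph (k^2) □ pathGraph (k^2)) k * (2*k+1)^2 := by
  classical
  obtain ⟨S, hres, hcard⟩ := dimK_exists (pathGraph (k^2) □ pathGraph (k^2)) k
  set far : Finset (Fin (k^2) × Fin (k^2)) := Finset.univ.filter
    (fun u => ∀ z ∈ S, k+1 ≤ nd u.1.val z.1.val + nd u.2.val z.2.val) with hfar_def
  set ball : Fin (k^2) × Fin (k^2) → Finset (Fin (k^2) × Fin (k^2)) := fun z =>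
    Finset.univ.filter (fun u => nd u.1.val z.1.val + nd u.2.val z.2.val ≤ k) with hball_def
  have hfar : far.card ≤ 1 := by
    rw [Finset.card_le_one]
    intro a ha b hb
    by_contra hab
    obtain ⟨z, hz, hneq⟩ := hres a b hab
    rw [Finset.mem_coe] at hz
    simp only [hfar_def, Finset.mem_filter] at ha hb
    have h1 := ha.2 z hz
    have h2 := hb.2 z hz
    apply hneq
    rw [distK_grid, distK_grid]
    congr 1
    omega
  have hball : ∀ z, (ball z).card ≤ (2*k+1)^2 := by
    intro z
    have h1 : (ball z).card ≤ ((Finset.range (2*k+1)) ×ˢ (Finset.range (2*k+1))).card := by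
      apply Finset.card_le_card_of_injOn
        (fun u => (u.1.val + k - z.1.val, u.2.val + k - z.2.val))
      · intro u hu
        simp only [hball_def, Finset.mem_filter, Finset.coe_filter, Finset.mem_univ, true_and,
          Set.mem_setOf_eq, nd, Finset.mem_coe, Set.mem_ofPred_eq] at hu
        simp only [Finset.mem_product, Finset.mem_range, Finset.mem_coe]
        have hu2 := (Finset.mem_filter.mp hu).2
        omega
      · intro u hu w hw heq
        simp only [hball_def, Finset.coe_filter, Finset.mem_univ, true_and,
          Set.mem_setOf_eq, nd, Finset.mem_coe, Finset.mem_filter, Set.mem_ofPred_eq] at hu hw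
        have h1 : u.1.val + k - z.1.val = w.1.val + k - z.1.val := congrArg Prod.fst heq
        have h2 : u.2.val + k - z.2.val = w.2.val + k - z.2.val := congrArg Prod.snd heq
        have hu2 := (Finset.mem_filter.mp hu).2
        have hw2 := (Finset.mem_filter.mp hw).2
        exact Prod.ext (Fin.ext (by omega)) (Fin.ext (by omega))
    rw [Finset.card_product, Finset.card_range] at h1
    calc (ball z).card ≤ (2*k+1) * (2*k+1) := h1
      _ = (2*k+1)^2 := (pow_two _).symm
  have hcover : (Finset.univ : Finset (Fin (k^2) × Fin (k^2))) ⊆ far ∪ S.biUnion ball := by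
    intro u _
    by_cases hu : ∀ z ∈ S, k+1 ≤ nd u.1.val z.1.val + nd u.2.val z.2.val
    · exact Finset.mem_union_left _ (Finset.mem_filter.mpr ⟨Finset.mem_univ _, hu⟩)
    · push_neg at hu
      obtain ⟨z, hz, hlt⟩ := hu
      refine Finset.mem_union_right _ (Finset.mem_biUnion.mpr ⟨z, hz, ?_⟩)
      exact Finset.mem_filter.mpr ⟨Finset.mem_univ _, by omega⟩
  calc k^4 = (Finset.univ : Finset (Fin (k^2) × Fin (k^2))).card := by
        rw [Finset.card_univ, Fintype.card_prod, Fintype.card_fin]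
        ring
    _ ≤ (far ∪ S.biUnion ball).card := Finset.card_le_card hcover
    _ ≤ far.card + (S.biUnion ball).card := Finset.card_union_le _ _
    _ ≤ 1 + S.card * (2*k+1)^2 := by
        apply Nat.add_le_add hfar
        calc (S.biUnion ball).card ≤ ∑ z ∈ S, (ball z).card := Finset.card_biUnion_le
          _ ≤ S.card * (2*k+1)^2 := Finset.sum_le_card_nsmul _ _ _ (fun z _ => hball z)
    _ = 1 + dimK (pathGraph (k^2) □ pathGraph (k^2)) k * (2*k+1)^2 := by rw [hcard]

lemma upper_bound (k : ℕ) (hk : 2 ≤ k) :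
    dimK (pathGraph (k^2) □ pathGraph (k^2)) k ≤ (k+2)^2 + (k+1)^2 :=
  le_trans (dimK_le_card _ _ _ (beacons_resolving k hk)) (beacons_card k)

/-- For any integer `k > 1`, the grid graph `G = P_{k²} □ P_{k²}` satisfies
`k⁴/(2k+1)² - 1 ≤ dimₖ(G) ≤ (k+2)² + (k+1)²`; in particular `dimₖ(G) = Θ(k²)`. -/
theorem stmt3 :
    (∀ k : ℕ, 1 < k →
      (k : ℝ) ^ 4 / (2 * (k : ℝ) + 1) ^ 2 - 1
          ≤ (dimK (pathGraph (k ^ 2) □ pathGraph (k ^ 2)) k : ℝ) ∧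
      dimK (pathGraph (k ^ 2) □ pathGraph (k ^ 2)) k ≤ (k + 2) ^ 2 + (k + 1) ^ 2) ∧
    (∃ c C : ℝ, 0 < c ∧ 0 < C ∧ ∀ k : ℕ, 1 < k →
      c * (k : ℝ) ^ 2 ≤ (dimK (pathGraph (k ^ 2) □ pathGraph (k ^ 2)) k : ℝ) ∧
      (dimK (pathGraph (k ^ 2) □ pathGraph (k ^ 2)) k : ℝ) ≤ C * (k : ℝ) ^ 2) := by
  constructor
  · intro k hk
    refine ⟨?_, upper_bound k hk⟩
    have hl := lower_count k hk
    have hm : (0:ℝ) ≤ (dimK (pathGraph (k ^ 2) □ pathGraph (k ^ 2)) k : ℝ) := Nat.cast_nonneg _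
    have hlr : (k:ℝ)^4 ≤ 1 + (dimK (pathGraph (k ^ 2) □ pathGraph (k ^ 2)) k : ℝ)
        * (2*(k:ℝ)+1)^2 := by exact_mod_cast hl
    have hk0 : (0:ℝ) ≤ (k:ℝ) := Nat.cast_nonneg _
    have hpos : (0:ℝ) < (2*(k:ℝ)+1)^2 := by positivity
    rw [sub_le_iff_le_add, div_le_iff₀ hpos]
    nlinarith [hlr, hpos, hk0, hm]
  · refine ⟨1/10, 7, by norm_num, by norm_num, ?_⟩
    intro k hk
    have hl := lower_count k hk
    have hu := upper_bound k hk
    have hk2 : (2:ℝ) ≤ (k:ℝ) := by exact_mod_cast hk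
    have hm : (0:ℝ) ≤ (dimK (pathGraph (k ^ 2) □ pathGraph (k ^ 2)) k : ℝ) := Nat.cast_nonneg _
    have hlr : (k:ℝ)^4 ≤ 1 + (dimK (pathGraph (k ^ 2) □ pathGraph (k ^ 2)) k : ℝ)
        * (2*(k:ℝ)+1)^2 := by exact_mod_cast hl
    have hur : (dimK (pathGraph (k ^ 2) □ pathGraph (k ^ 2)) k : ℝ)
        ≤ ((k:ℝ)+2)^2 + ((k:ℝ)+1)^2 := by exact_mod_cast hu
    constructor
    · nlinarith [hlr, hk2, hm, sq_nonneg ((k:ℝ)-2), sq_nonneg ((k:ℝ)^2-2*(k:ℝ)),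
        mul_nonneg (sub_nonneg.mpr hk2) (pow_nonneg (by linarith : (0:ℝ) ≤ (k:ℝ)) 3),
        mul_nonneg (sub_nonneg.mpr hk2) (pow_nonneg (by linarith : (0:ℝ) ≤ (k:ℝ)) 2)]
    · nlinarith [hur, hk2]
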